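/- Let X ⊆ ℝ² be a finite set with at least two points, let D(X) = max A(X) be its diameter, and suppose P₁, …, P_{2k+1} ∈ X are pairwise distinct points with dist(P_i, P_{i+1}) = D(X) for all i (indices cyclic), i.e., the diameter graph DG(X) contains an odd cycle C on these vertices. Then: (a) any two points of X not belonging to {P₁, …, P_{2k+1}} are at distance strictly less than D(X) from each other; and (b) every point of X not in {P₁, …, P_{2k+1}} is at distance D(X) from at most one of the points P₁, …, P_{2k+1}. -/

import Mathlib

noncomputable section
open scoped Fin.NatCast Fin.CommRing
abbrev E2 := EuclideanSpace ℝ (Fin 2)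

def cr (a b p : E2) : ℝ := (b 0 - a 0) * (p 1 - a 1) - (b 1 - a 1) * (p 0 - a 0)

lemma dsq (x y : E2) : dist x y ^ 2 = (x 0 - y 0)^2 + (x 1 - y 1)^2 := by
  rw [EuclideanSpace.dist_eq, Real.sq_sqrt (by positivity)]
  simp [Fin.sum_univ_two, Real.dist_eq, sq_abs]

lemma dle (x y : E2) (D : ℝ) (h : dist x y ≤ D) :
    (x 0 - y 0)^2 + (x 1 - y 1)^2 ≤ D^2 := by
  rw [← dsq]; exact pow_le_pow_left₀ dist_nonneg h 2

lemma deq (x y : E2) (D : ℝ) (h : dist x y = D) :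
    (x 0 - y 0)^2 + (x 1 - y 1)^2 = D^2 := by
  rw [← dsq, h]

set_option maxHeartbeats 2000000 in
lemma lemA'core (Dv c1 c2 d1 d2 : ℝ) (hD : 0 < Dv)
    (h1 : c1^2 + c2^2 ≤ Dv^2) (h2 : (c1 - Dv)^2 + c2^2 ≤ Dv^2)
    (h3 : d1^2 + d2^2 ≤ Dv^2) (h4 : (d1 - Dv)^2 + d2^2 ≤ Dv^2)
    (h5 : (c1 - d1)^2 + (c2 - d2)^2 = Dv^2)
    (hc2 : 0 < c2) (hd2 : 0 < d2) (hord : d2 ≤ c2) : False := by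
  have e1 : (0:ℝ) ≤ Dv^2 - c2^2 := by nlinarith [sq_nonneg c1]
  have e2 : (0:ℝ) ≤ Dv^2 - d2^2 := by nlinarith [sq_nonneg d1]
  obtain ⟨s, hs0, hs2⟩ : ∃ s : ℝ, 0 ≤ s ∧ s^2 = Dv^2 - c2^2 :=
    ⟨Real.sqrt (Dv^2 - c2^2), Real.sqrt_nonneg _, Real.sq_sqrt e1⟩
  obtain ⟨t, ht0, ht2⟩ : ∃ t : ℝ, 0 ≤ t ∧ t^2 = Dv^2 - d2^2 :=
    ⟨Real.sqrt (Dv^2 - d2^2), Real.sqrt_nonneg _, Real.sq_sqrt e2⟩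
  have key : ∀ u v : ℝ, 0 ≤ v → u^2 ≤ v^2 → u ≤ v := by
    intro u v hv h
    calc u ≤ |u| := le_abs_self _
      _ = Real.sqrt (u^2) := (Real.sqrt_sq_eq_abs u).symm
      _ ≤ Real.sqrt (v^2) := Real.sqrt_le_sqrt h
      _ = v := Real.sqrt_sq hv
  have htD : t ≤ Dv := key t Dv hD.le (by nlinarith [sq_nonneg d2])
  have hc1u : c1 ≤ s := key c1 s hs0 (by nlinarith)
  have hc1l : Dv - s ≤ c1 := by
    have := key (Dv - c1) s hs0 (by nlinarith)
    linarith
  have hd1u : d1 ≤ t := key d1 t ht0 (by nlinarith)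
  have hd1l : Dv - t ≤ d1 := by
    have := key (Dv - d1) t ht0 (by nlinarith)
    linarith
  have k1 : c1 - d1 ≤ s := by linarith
  have k2 : d1 - c1 ≤ s := by linarith
  have k3 : (c1 - d1)^2 ≤ s^2 := by nlinarith [mul_nonneg (by linarith : (0:ℝ) ≤ s - (c1 - d1)) (by linarith : (0:ℝ) ≤ s + (c1 - d1))]
  nlinarith [mul_pos hd2 (show (0:ℝ) < 2*c2 - d2 by linarith)]

lemma lemA' (Dv c1 c2 d1 d2 : ℝ) (hD : 0 < Dv)
    (h1 : c1^2 + c2^2 ≤ Dv^2) (h2 : (c1 - Dv)^2 + c2^2 ≤ Dv^2)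
    (h3 : d1^2 + d2^2 ≤ Dv^2) (h4 : (d1 - Dv)^2 + d2^2 ≤ Dv^2)
    (h5 : (c1 - d1)^2 + (c2 - d2)^2 = Dv^2)
    (hc2 : 0 < c2) (hd2 : 0 < d2) : False := by
  rcases le_total d2 c2 with h | h
  · exact lemA'core Dv c1 c2 d1 d2 hD h1 h2 h3 h4 h5 hc2 hd2 h
  · exact lemA'core Dv d1 d2 c1 c2 hD h3 h4 h1 h2 (by linear_combination h5) hd2 hc2 h

set_option maxHeartbeats 2000000 in
lemma lemAcoord (D a0 a1 b0 b1 c0 c1 d0 d1 : ℝ) (hD : 0 < D)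
    (hab : (a0-b0)^2+(a1-b1)^2 = D^2) (hcd : (c0-d0)^2+(c1-d1)^2 = D^2)
    (hac : (a0-c0)^2+(a1-c1)^2 ≤ D^2) (had : (a0-d0)^2+(a1-d1)^2 ≤ D^2)
    (hbc : (b0-c0)^2+(b1-c1)^2 ≤ D^2) (hbd : (b0-d0)^2+(b1-d1)^2 ≤ D^2)
    (hc : 0 < (b0-a0)*(c1-a1) - (b1-a1)*(c0-a0))
    (hd : 0 < (b0-a0)*(d1-a1) - (b1-a1)*(d0-a0)) : False := by
  have hDsq : (0:ℝ) ≤ D^2 := sq_nonneg D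
  apply lemA' (D^2)
    ((b0-a0)*(c0-a0)+(b1-a1)*(c1-a1)) ((b0-a0)*(c1-a1) - (b1-a1)*(c0-a0))
    ((b0-a0)*(d0-a0)+(b1-a1)*(d1-a1)) ((b0-a0)*(d1-a1) - (b1-a1)*(d0-a0))
    (by positivity) ?_ ?_ ?_ ?_ ?_ hc hd
  · have e : ((b0-a0)*(c0-a0)+(b1-a1)*(c1-a1))^2 + ((b0-a0)*(c1-a1) - (b1-a1)*(c0-a0))^2
        = D^2*((a0-c0)^2+(a1-c1)^2) := by linear_combination ((a0-c0)^2+(a1-c1)^2) * hab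
    rw [e]; exact le_trans (mul_le_mul_of_nonneg_left hac hDsq) (by ring_nf; exact le_refl _)
  · have e : ((b0-a0)*(c0-a0)+(b1-a1)*(c1-a1) - D^2)^2 + ((b0-a0)*(c1-a1) - (b1-a1)*(c0-a0))^2
        = D^2*((b0-c0)^2+(b1-c1)^2) := by
      linear_combination ((b0-c0)^2+(b1-c1)^2 + 2*((b0-a0)*(c0-b0)+(b1-a1)*(c1-b1)) + (a0-b0)^2+(a1-b1)^2 - D^2) * hab
    rw [e]; exact le_trans (mul_le_mul_of_nonneg_left hbc hDsq) (by ring_nf; exact le_refl _)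
  · have e : ((b0-a0)*(d0-a0)+(b1-a1)*(d1-a1))^2 + ((b0-a0)*(d1-a1) - (b1-a1)*(d0-a0))^2
        = D^2*((a0-d0)^2+(a1-d1)^2) := by linear_combination ((a0-d0)^2+(a1-d1)^2) * hab
    rw [e]; exact le_trans (mul_le_mul_of_nonneg_left had hDsq) (by ring_nf; exact le_refl _)
  · have e : ((b0-a0)*(d0-a0)+(b1-a1)*(d1-a1) - D^2)^2 + ((b0-a0)*(d1-a1) - (b1-a1)*(d0-a0))^2
        = D^2*((b0-d0)^2+(b1-d1)^2) := by
      linear_combination ((b0-d0)^2+(b1-d1)^2 + 2*((b0-a0)*(d0-b0)+(b1-a1)*(d1-b1)) + (a0-b0)^2+(a1-b1)^2 - D^2) * hab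
    rw [e]; exact le_trans (mul_le_mul_of_nonneg_left hbd hDsq) (by ring_nf; exact le_refl _)
  · linear_combination ((c0-d0)^2+(c1-d1)^2) * hab + (D^2) * hcd


lemma helper1 (M π ρ ω : ℝ) (hM0 : 0 < M)
    (hA2 : π^2 ≤ M*M) (hB2 : (π-M)^2 ≤ M*M)
    (hC2 : ρ^2+ω^2 ≤ M*M) (hD2 : (ρ-M)^2+ω^2 ≤ M*M)
    (hE : (π-ρ)^2+ω^2 = M*M) (hπ0 : π ≠ 0) (hπM : π ≠ M) : False := by
  have hπpos : 0 < π := by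
    rcases lt_or_gt_of_ne hπ0 with h | h
    · nlinarith
    · exact h
  have hπltM : π < M := by
    rcases lt_or_gt_of_ne hπM with h | h
    · exact h
    · nlinarith
  have k1 : π*(π - 2*ρ) ≥ 0 := by nlinarith
  have k2 : 2*ρ ≤ π := by nlinarith
  have k3 : (M - π)*(2*ρ - M - π) ≥ 0 := by nlinarith
  nlinarith

set_option maxHeartbeats 1000000 in
lemma onSegcoord (D x0 x1 y0 y1 p0 p1 q0 q1 : ℝ) (hD : 0 < D)
    (hxy : (x0-y0)^2+(x1-y1)^2 = D^2) (hpq : (p0-q0)^2+(p1-q1)^2 = D^2)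
    (hxq : (x0-q0)^2+(x1-q1)^2 ≤ D^2) (hyq : (y0-q0)^2+(y1-q1)^2 ≤ D^2)
    (hxp : (x0-p0)^2+(x1-p1)^2 ≤ D^2) (hyp' : (y0-p0)^2+(y1-p1)^2 ≤ D^2)
    (hcr : (y0-x0)*(p1-x1) - (y1-x1)*(p0-x0) = 0)
    (hpx : (x0-p0)^2+(x1-p1)^2 ≠ 0) (hpy : (y0-p0)^2+(y1-p1)^2 ≠ 0) : False := by
  have hM0 : 0 < D^2 := by positivity
  have A : ((y0-x0)*(p0-x0)+(y1-x1)*(p1-x1))^2 = D^2*((x0-p0)^2+(x1-p1)^2) := by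
    linear_combination ((x0-p0)^2+(x1-p1)^2) * hxy - ((y0-x0)*(p1-x1) - (y1-x1)*(p0-x0)) * hcr
  have B : (((y0-x0)*(p0-x0)+(y1-x1)*(p1-x1)) - D^2)^2 = D^2*((y0-p0)^2+(y1-p1)^2) := by
    linear_combination ((y0-p0)^2+(y1-p1)^2 + 2*((y0-x0)*(p0-y0)+(y1-x1)*(p1-y1)) + (x0-y0)^2+(x1-y1)^2 - D^2) * hxy - ((y0-x0)*(p1-x1) - (y1-x1)*(p0-x0)) * hcr
  have C : ((y0-x0)*(q0-x0)+(y1-x1)*(q1-x1))^2 + ((y0-x0)*(q1-x1)-(y1-x1)*(q0-x0))^2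
      = D^2*((x0-q0)^2+(x1-q1)^2) := by
    linear_combination ((x0-q0)^2+(x1-q1)^2) * hxy
  have Dd : (((y0-x0)*(q0-x0)+(y1-x1)*(q1-x1)) - D^2)^2 + ((y0-x0)*(q1-x1)-(y1-x1)*(q0-x0))^2
      = D^2*((y0-q0)^2+(y1-q1)^2) := by
    linear_combination ((y0-q0)^2+(y1-q1)^2 + 2*((y0-x0)*(q0-y0)+(y1-x1)*(q1-y1)) + (x0-y0)^2+(x1-y1)^2 - D^2) * hxy
  have Ee : (((y0-x0)*(p0-x0)+(y1-x1)*(p1-x1)) - ((y0-x0)*(q0-x0)+(y1-x1)*(q1-x1)))^2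
        + ((y0-x0)*(q1-x1)-(y1-x1)*(q0-x0))^2 = D^2*D^2 := by
    linear_combination ((p0-q0)^2+(p1-q1)^2) * hxy + D^2 * hpq + (2*((y0-x0)*(q1-x1)-(y1-x1)*(q0-x0)) - ((y0-x0)*(p1-x1) - (y1-x1)*(p0-x0))) * hcr
  apply helper1 (D^2) ((y0-x0)*(p0-x0)+(y1-x1)*(p1-x1))
      ((y0-x0)*(q0-x0)+(y1-x1)*(q1-x1)) ((y0-x0)*(q1-x1)-(y1-x1)*(q0-x0)) hM0
  · rw [A]; exact mul_le_mul_of_nonneg_left hxp hM0.le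
  · rw [B]; exact mul_le_mul_of_nonneg_left hyp' hM0.le
  · rw [C]; exact mul_le_mul_of_nonneg_left hxq hM0.le
  · rw [Dd]; exact mul_le_mul_of_nonneg_left hyq hM0.le
  · exact Ee
  · intro h
    apply hpx
    have h2 : D^2*((x0-p0)^2+(x1-p1)^2) = 0 := by rw [← A, h]; ring
    exact (mul_eq_zero.1 h2).resolve_left (ne_of_gt hM0)
  · intro h
    apply hpy
    have h2 : D^2*((y0-p0)^2+(y1-p1)^2) = 0 := by
      rw [← B, h]; ring
    exact (mul_eq_zero.1 h2).resolve_left (ne_of_gt hM0)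


lemma sumsq0 (a b : ℝ) (h : a^2 + b^2 = 0) : a = 0 ∧ b = 0 := by
  constructor <;> nlinarith [sq_nonneg a, sq_nonneg b]

set_option maxHeartbeats 1000000 in
lemma rhombcoord (D x0 x1 z0 z1 u0 u1 w0 w1 : ℝ) (hD : 0 < D)
    (hxu : (x0-u0)^2+(x1-u1)^2 = D^2) (hxw : (x0-w0)^2+(x1-w1)^2 = D^2)
    (hzu : (z0-u0)^2+(z1-u1)^2 = D^2) (hzw : (z0-w0)^2+(z1-w1)^2 = D^2)
    (huw : (u0-w0)^2+(u1-w1)^2 ≤ D^2) (hxz : (x0-z0)^2+(x1-z1)^2 ≤ D^2)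
    (hne : (x0-z0)^2+(x1-z1)^2 ≠ 0) (hne2 : (u0-w0)^2+(u1-w1)^2 ≠ 0) : False := by
  obtain ⟨a0, ha0⟩ : ∃ a : ℝ, a = u0 - w0 := ⟨_, rfl⟩
  obtain ⟨a1, ha1⟩ : ∃ a : ℝ, a = u1 - w1 := ⟨_, rfl⟩
  obtain ⟨p0, hp0⟩ : ∃ a : ℝ, a = 2*x0 - u0 - w0 := ⟨_, rfl⟩
  obtain ⟨p1, hp1⟩ : ∃ a : ℝ, a = 2*x1 - u1 - w1 := ⟨_, rfl⟩
  obtain ⟨q0, hq0⟩ : ∃ a : ℝ, a = 2*z0 - u0 - w0 := ⟨_, rfl⟩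
  obtain ⟨q1, hq1⟩ : ∃ a : ℝ, a = 2*z1 - u1 - w1 := ⟨_, rfl⟩
  have E1 : p0*a0 + p1*a1 = 0 := by
    rw [hp0, hp1, ha0, ha1]; linear_combination hxw - hxu
  have E2 : q0*a0 + q1*a1 = 0 := by
    rw [hq0, hq1, ha0, ha1]; linear_combination hzw - hzu
  have E3 : p0^2+p1^2 = 4*D^2 - (a0^2+a1^2) := by
    rw [hp0, hp1, ha0, ha1]; linear_combination 2*hxu + 2*hxw
  have E4 : q0^2+q1^2 = 4*D^2 - (a0^2+a1^2) := by
    rw [hq0, hq1, ha0, ha1]; linear_combination 2*hzu + 2*hzw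
  have hNne : a0^2 + a1^2 ≠ 0 := by rw [ha0, ha1]; exact hne2
  have hcross : p0*q1 - p1*q0 = 0 := by
    have h1 : a0 * (p0*q1 - p1*q0) = 0 := by linear_combination q1*E1 - p1*E2
    have h2 : a1 * (p0*q1 - p1*q0) = 0 := by linear_combination (-q0)*E1 + p0*E2
    by_cases ha : a0 = 0
    · have ha1' : a1 ≠ 0 := by
        intro h; apply hNne; rw [ha, h]; ring
      exact (mul_eq_zero.1 h2).resolve_left ha1'
    · exact (mul_eq_zero.1 h1).resolve_left ha
  have key : ((p0-q0)^2+(p1-q1)^2) * ((p0+q0)^2+(p1+q1)^2)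
      = ((p0^2+p1^2) - (q0^2+q1^2))^2 + 4*(p0*q1 - p1*q0)^2 := by ring
  rw [E3, E4, hcross] at key
  have hPQ : (p0-q0)^2+(p1-q1)^2 = 4*((x0-z0)^2+(x1-z1)^2) := by
    rw [hp0, hp1, hq0, hq1]; ring
  have hPQne : (p0-q0)^2+(p1-q1)^2 ≠ 0 := by
    rw [hPQ]; intro h
    exact hne (by linarith [sq_nonneg (x0-z0), sq_nonneg (x1-z1)])
  have hsum : (p0+q0)^2+(p1+q1)^2 = 0 := by
    have hz : ((p0-q0)^2+(p1-q1)^2) * ((p0+q0)^2+(p1+q1)^2) = 0 := by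
      rw [key]; ring
    exact (mul_eq_zero.1 hz).resolve_left hPQne
  obtain ⟨h0, h1⟩ := sumsq0 _ _ hsum
  have hq0' : q0 = -p0 := by linarith
  have hq1' : q1 = -p1 := by linarith
  have hfin : 4*((x0-z0)^2+(x1-z1)^2) = 16*D^2 - 4*(a0^2+a1^2) := by
    rw [← hPQ, hq0', hq1']; linear_combination 4*E3
  have haN : a0^2+a1^2 ≤ D^2 := by rw [ha0, ha1]; exact huw
  have hM0 : (0:ℝ) < D^2 := by positivity
  linarith [hfin, haN, hxz, hM0]


lemma dne (x y : E2) (h : x ≠ y) : (x 0 - y 0)^2 + (x 1 - y 1)^2 ≠ 0 := by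
  intro hc
  apply h
  have h0 : x 0 = y 0 := by nlinarith [sq_nonneg (x 0 - y 0), sq_nonneg (x 1 - y 1)]
  have h1 : x 1 = y 1 := by nlinarith [sq_nonneg (x 0 - y 0), sq_nonneg (x 1 - y 1)]
  ext i
  fin_cases i <;> assumption

/-- E-level lemma A : both strictly positive side impossible -/
lemma lemAE (D : ℝ) (hD : 0 < D) (a b c d : E2)
    (hab : dist a b = D) (hcd : dist c d = D)
    (hac : dist a c ≤ D) (had : dist a d ≤ D)
    (hbc : dist b c ≤ D) (hbd : dist b d ≤ D)
    (hc : 0 < cr a b c) (hd' : 0 < cr a b d) : False :=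
  lemAcoord D (a 0) (a 1) (b 0) (b 1) (c 0) (c 1) (d 0) (d 1) hD
    (deq a b D hab) (deq c d D hcd) (dle a c D hac) (dle a d D had)
    (dle b c D hbc) (dle b d D hbd) hc hd'

lemma crswap (a b p : E2) : cr b a p = - cr a b p := by unfold cr; ring

/-- E-level lemma A : both strictly negative side impossible -/
lemma lemAEneg (D : ℝ) (hD : 0 < D) (a b c d : E2)
    (hab : dist a b = D) (hcd : dist c d = D)
    (hac : dist a c ≤ D) (had : dist a d ≤ D)
    (hbc : dist b c ≤ D) (hbd : dist b d ≤ D)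
    (hc : cr a b c < 0) (hd' : cr a b d < 0) : False :=
  lemAE D hD b a c d (by rwa [dist_comm]) hcd hbc hbd hac had
    (by rw [crswap]; linarith) (by rw [crswap]; linarith)

/-- a cycle vertex cannot lie on the line through x y -/
lemma onSegE (D : ℝ) (hD : 0 < D) (x y p q : E2)
    (hxy : dist x y = D) (hpq : dist p q = D)
    (hxq : dist x q ≤ D) (hyq : dist y q ≤ D)
    (hxp : dist x p ≤ D) (hyp' : dist y p ≤ D)
    (hcr : cr x y p = 0) (hpx : p ≠ x) (hpy : p ≠ y) : False :=
  onSegcoord D (x 0) (x 1) (y 0) (y 1) (p 0) (p 1) (q 0) (q 1) hD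
    (deq x y D hxy) (deq p q D hpq) (dle x q D hxq) (dle y q D hyq)
    (dle x p D hxp) (dle y p D hyp') hcr (dne x p hpx.symm) (dne y p hpy.symm)

lemma offcycle (X : Set E2) (D : ℝ) (hDpos : 0 < D)
    (hD2 : ∀ p ∈ X, ∀ q ∈ X, dist p q ≤ D)
    (n : ℕ) (Q : Fin (2*n+3) → E2) (hQX : ∀ m, Q m ∈ X)
    (hQcyc : ∀ m, dist (Q m) (Q (m+1)) = D)
    (x y : E2) (hx : x ∈ X) (hy : y ∈ X)
    (hxQ : x ∉ Set.range Q) (hyQ : y ∉ Set.range Q) (hxy : x ≠ y) :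
    dist x y < D := by
  rcases lt_or_eq_of_le (hD2 x hx y hy) with h | hEq
  · exact h
  exfalso
  by_cases hzero : ∃ m, cr x y (Q m) = 0
  · obtain ⟨m, hm⟩ := hzero
    exact onSegE D hDpos x y (Q m) (Q (m+1)) hEq (hQcyc m)
      (hD2 x hx _ (hQX _)) (hD2 y hy _ (hQX _)) (hD2 x hx _ (hQX _)) (hD2 y hy _ (hQX _)) hm
      (fun h => hxQ ⟨m, h⟩) (fun h => hyQ ⟨m, h⟩)
  push_neg at hzero
  have hAlt : ∀ m : Fin (2*n+3), cr x y (Q m) * cr x y (Q (m+1)) < 0 := by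
    intro m
    rcases lt_trichotomy (cr x y (Q m)) 0 with h1 | h1 | h1
    · rcases lt_trichotomy (cr x y (Q (m+1))) 0 with h2 | h2 | h2
      · exact absurd (lemAEneg D hDpos x y (Q m) (Q (m+1)) hEq (hQcyc m)
          (hD2 x hx _ (hQX _)) (hD2 x hx _ (hQX _)) (hD2 y hy _ (hQX _)) (hD2 y hy _ (hQX _))
          h1 h2) (fun h => h)
      · exact absurd h2 (hzero (m+1))
      · exact mul_neg_of_neg_of_pos h1 h2
    · exact absurd h1 (hzero m)
    · rcases lt_trichotomy (cr x y (Q (m+1))) 0 with h2 | h2 | h2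
      · exact mul_neg_of_pos_of_neg h1 h2
      · exact absurd h2 (hzero (m+1))
      · exact absurd (lemAE D hDpos x y (Q m) (Q (m+1)) hEq (hQcyc m)
          (hD2 x hx _ (hQX _)) (hD2 x hx _ (hQX _)) (hD2 y hy _ (hQX _)) (hD2 y hy _ (hQX _))
          h1 h2) (fun h => h)
  have hflip : ∀ N : ℕ, cr x y (Q (N : Fin (2*n+3))) * cr x y (Q ((N+1 : ℕ) : Fin (2*n+3))) < 0 := by
    intro N
    have e : ((N+1 : ℕ) : Fin (2*n+3)) = (N : Fin (2*n+3)) + 1 := by push_cast; ring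
    rw [e]; exact hAlt _
  have key : ∀ N : ℕ, Even N ↔ 0 < cr x y (Q 0) * cr x y (Q (N : Fin (2*n+3))) := by
    intro N
    induction N with
    | zero =>
      rw [Nat.cast_zero]
      exact ⟨fun _ => mul_self_pos.2 (hzero 0), fun _ => Even.zero⟩
    | succ N ih =>
      have hp := hflip N
      have ha : cr x y (Q 0) ≠ 0 := hzero 0
      have prodneg : (cr x y (Q 0) * cr x y (Q (N : Fin (2*n+3)))) *
          (cr x y (Q 0) * cr x y (Q ((N+1 : ℕ) : Fin (2*n+3)))) < 0 := by
        have h1 : 0 < cr x y (Q 0) * cr x y (Q 0) := mul_self_pos.2 ha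
        nlinarith
      rw [Nat.even_add_one, ih]
      constructor
      · intro hnot
        rcases lt_trichotomy (cr x y (Q 0) * cr x y (Q (N : Fin (2*n+3)))) 0 with hb | hb | hb
        · rcases lt_trichotomy (cr x y (Q 0) * cr x y (Q ((N+1:ℕ) : Fin (2*n+3)))) 0 with hc | hc | hc
          · exact absurd (mul_pos_of_neg_of_neg hb hc) (by linarith)
          · rw [hc] at prodneg; simp at prodneg
          · exact hc
        · rw [hb] at prodneg; simp at prodneg
        · exact absurd hb hnot
      · intro hpos hb
        nlinarith
  have h2n3 : ((2*n+3 : ℕ) : Fin (2*n+3)) = 0 := Fin.natCast_self _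
  have hev : Even (2*n+3) := by
    rw [key (2*n+3), h2n3]
    exact mul_self_pos.2 (hzero 0)
  obtain ⟨r, hr⟩ := hev
  omega



/-- two distinct common points of two radius-`D` circles with centers at distance `≤ D`
are more than `D` apart: contradiction inside `X` -/
lemma rhombE (D : ℝ) (hD : 0 < D) (x z u w : E2)
    (hxu : dist x u = D) (hxw : dist x w = D)
    (hzu : dist z u = D) (hzw : dist z w = D)
    (huw : dist u w ≤ D) (hxz : dist x z ≤ D)
    (hne : x ≠ z) (hne2 : u ≠ w) : False :=
  rhombcoord D (x 0) (x 1) (z 0) (z 1) (u 0) (u 1) (w 0) (w 1) hD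
    (deq x u D hxu) (deq x w D hxw) (deq z u D hzu) (deq z w D hzw)
    (dle u w D huw) (dle x z D hxz) (dne x z hne) (dne u w hne2)

lemma finaddval (n : ℕ) [NeZero n] (j : Fin n) (a : ℕ) :
    (j + (a : Fin n)).val = (j.val + a) % n := by
  rw [Fin.val_add, Fin.val_natCast, Nat.add_mod j.val a, Nat.mod_eq_of_lt j.is_lt]

/-- If the diameter graph of a finite planar point set `X` contains an odd cycle
`P₁, …, P_{2k+1}` (odd length `2k+3`, `k ≥ 0` below), then (a) any two distinct
points of `X` outside the cycle are at distance `< D(X)`, and (b) every point of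
`X` outside the cycle is at distance `D(X)` from at most one point of the cycle. -/
theorem stmt_8 (X : Set (EuclideanSpace ℝ (Fin 2))) (hfin : X.Finite)
    (hcard : 2 ≤ X.ncard) (D : ℝ)
    (hD : IsGreatest {d : ℝ | ∃ p ∈ X, ∃ q ∈ X, p ≠ q ∧ dist p q = d} D)
    (k : ℕ) (P : Fin (2 * k + 3) → EuclideanSpace ℝ (Fin 2))
    (hPX : ∀ i, P i ∈ X) (hPinj : Function.Injective P)
    (hPcyc : ∀ i, dist (P i) (P (i + 1)) = D) :
    (∀ x ∈ X, ∀ y ∈ X, x ∉ Set.range P → y ∉ Set.range P → x ≠ y →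
      dist x y < D) ∧
    (∀ x ∈ X, x ∉ Set.range P →
      ∀ i j, dist x (P i) = D → dist x (P j) = D → i = j) := by
  have hDpos : 0 < D := by
    obtain ⟨p, hp, q, hq, hne, hdq⟩ := hD.1
    rw [← hdq]; exact dist_pos.2 hne
  have distX : ∀ p ∈ X, ∀ q ∈ X, dist p q ≤ D := by
    intro p hp q hq
    by_cases h : p = q
    · rw [h, dist_self]; exact hDpos.le
    · exact hD.2 ⟨p, hp, q, hq, h, rfl⟩
  constructor
  · intro x hx y hy hxP hyP hxy
    exact offcycle X D hDpos distX k P hPX hPcyc x y hx hy hxP hyP hxy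
  · intro x hx hxP i j hdi hdj
    by_contra hij
    have honeval : (1 : Fin (2*k+3)).val = 1 := by rw [Fin.val_one']; exact Nat.mod_eq_of_lt (by omega)
    have haddv : ∀ (j : Fin (2*k+3)) (a : ℕ), (j + (a : Fin (2*k+3))).val = (j.val + a) % (2*k+3) :=
      fun j a => finaddval (2*k+3) j a
    have aux : ∀ i j : Fin (2*k+3), i ≠ j → Odd ((j - i).val) →
        dist x (P i) = D → dist x (P j) = D → False := by
      intro i j hij hodd hdi hdj
      have hsub : j - i ≠ 0 := sub_ne_zero.2 (Ne.symm hij)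
      have hdval : (j - i).val ≠ 0 := fun h => hsub (Fin.ext (by simp [h]))
      have hdlt : (j - i).val < 2*k+3 := (j - i).is_lt
      obtain ⟨c, hc⟩ := hodd
      have hji : j = i + (((j - i).val : ℕ) : Fin (2*k+3)) := by
        rw [Fin.cast_val_eq_self]; ring
      by_cases hcase : (j - i).val = 2*k+1
      · -- rhombus case
        have hii : j + 2 = i := by
          have h2 : ((2*k+1 : ℕ) : Fin (2*k+3)) + 2 = 0 := by
            have e1 : ((2 : ℕ) : Fin (2*k+3)) = (2 : Fin (2*k+3)) := by push_cast; ring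
            rw [← e1]
            have e2 : ((2*k+1 : ℕ) : Fin (2*k+3)) + ((2:ℕ) : Fin (2*k+3)) = ((2*k+3 : ℕ) : Fin (2*k+3)) := by
              push_cast; ring
            rw [e2, Fin.natCast_self]
          calc j + 2 = i + (((j - i).val : ℕ) : Fin (2*k+3)) + 2 := by rw [← hji]
            _ = i + ((((2*k+1 : ℕ)) : Fin (2*k+3)) + 2) := by rw [hcase]; ring
            _ = i := by rw [h2, add_zero]
        have hzw : dist (P (j+1)) (P i) = D := by
          rw [← hii]
          have := hPcyc (j+1)
          rwa [show j + 1 + 1 = j + 2 by ring] at this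
        exact rhombE D hDpos x (P (j+1)) (P j) (P i) hdj hdi
          (by rw [dist_comm]; exact hPcyc j) hzw
          (distX _ (hPX _) _ (hPX _)) (distX _ hx _ (hPX _))
          (fun h => hxP ⟨j+1, h.symm⟩) (fun h => hij (hPinj h).symm)
      · -- main case: build odd cycle through x and apply offcycle
        have hdle : (j - i).val ≤ 2*k - 1 := by omega
        set Q : Fin (2*c+3) → E2 :=
          fun m => if m.val = 0 then x else P (i + ((m.val - 1 : ℕ) : Fin (2*k+3))) with hQ
        have hQX : ∀ m, Q m ∈ X := by
          intro m
          rw [hQ]; dsimp only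
          split
          · exact hx
          · exact hPX _
        have honec : (1 : Fin (2*c+3)).val = 1 := by rw [Fin.val_one']; exact Nat.mod_eq_of_lt (by omega)
        have haddc : ∀ (m : Fin (2*c+3)), (m + 1).val = (m.val + 1) % (2*c+3) := by
          intro m
          have : ((1:ℕ) : Fin (2*c+3)) = (1 : Fin (2*c+3)) := by push_cast; ring
          rw [← this, finaddval]
        have hQcyc : ∀ m : Fin (2*c+3), dist (Q m) (Q (m+1)) = D := by
          intro m
          have hmlt : m.val < 2*c+3 := m.is_lt
          by_cases h0 : m.val = 0
          · have hm1 : (m+1).val = 1 := by rw [haddc, h0]; exact Nat.mod_eq_of_lt (by omega)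
            rw [hQ]; dsimp only
            rw [if_pos h0, if_neg (by omega : ¬ (m+1).val = 0)]
            rw [hm1]
            norm_num
            exact hdi
          · by_cases hlast : m.val = 2*c+2
            · have hm1 : (m+1).val = 0 := by rw [haddc, hlast]; exact Nat.mod_self _
              rw [hQ]; dsimp only
              rw [if_neg h0, if_pos hm1, hlast]
              have e3 : ((2*c+2-1 : ℕ) : Fin (2*k+3)) = j - i := by
                apply Fin.ext
                rw [Fin.val_natCast, Nat.mod_eq_of_lt (by omega)]
                omega
              rw [e3, show i + (j - i) = j by ring, dist_comm]
              exact hdj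
            · have hm1 : (m+1).val = m.val + 1 := by rw [haddc]; exact Nat.mod_eq_of_lt (by omega)
              rw [hQ]; dsimp only
              rw [if_neg h0, if_neg (by omega), hm1]
              have e4 : ((m.val + 1 - 1 : ℕ) : Fin (2*k+3)) = ((m.val - 1 : ℕ) : Fin (2*k+3)) + 1 := by
                have h5 : m.val - 1 + 1 = m.val + 1 - 1 := by omega
                rw [← h5]; push_cast; ring
              rw [e4, ← add_assoc]
              exact hPcyc _
        have hrange : ∀ m : Fin (2*c+3), Q m = x ∨
            ∃ t : ℕ, t ≤ 2*c+1 ∧ Q m = P (i + (t : Fin (2*k+3))) := by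
          intro m
          rw [hQ]; dsimp only
          split
          · exact Or.inl rfl
          · exact Or.inr ⟨m.val - 1, by omega, rfl⟩
        have hkey : ∀ a : ℕ, 2*c+2 ≤ a → a ≤ 2*c+3 → P (i + (a : Fin (2*k+3))) ∉ Set.range Q := by
          intro a ha1 ha2
          rintro ⟨m, hm⟩
          rcases hrange m with h | ⟨t, ht, he⟩
          · rw [hm] at h
            exact hxP ⟨_, h⟩
          · rw [hm] at he
            have := hPinj he
            have hval := congrArg Fin.val (add_left_cancel this)
            rw [Fin.val_natCast, Fin.val_natCast] at hval
            have ha3 : a < 2*k+3 := by omega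
            rw [Nat.mod_eq_of_lt ha3, Nat.mod_eq_of_lt (by omega)] at hval
            omega
        have hj1 : j + 1 = i + (((2*c+2 : ℕ)) : Fin (2*k+3)) := by
          rw [hji, hc]
          have : ((1:ℕ) : Fin (2*k+3)) = (1 : Fin (2*k+3)) := by push_cast; ring
          rw [← this]
          push_cast; ring
        have hj2 : j + 2 = i + (((2*c+3 : ℕ)) : Fin (2*k+3)) := by
          rw [hji, hc]
          have : ((2:ℕ) : Fin (2*k+3)) = (2 : Fin (2*k+3)) := by push_cast; ring
          rw [← this]
          push_cast; ring
        have hne12 : P (j+1) ≠ P (j+2) := by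
          intro h
          have hval := congrArg Fin.val (add_left_cancel (hPinj h))
          have honev2 : (2 : Fin (2*k+3)).val = 2 := by
            rw [show (2 : Fin (2*k+3)) = ((2:ℕ) : Fin (2*k+3)) from by push_cast; ring,
              Fin.val_natCast]
            exact Nat.mod_eq_of_lt (by omega)
          rw [honeval, honev2] at hval
          omega
        have hlt := offcycle X D hDpos distX c Q hQX hQcyc (P (j+1)) (P (j+2)) (hPX _) (hPX _)
          (by rw [hj1]; exact hkey (2*c+2) le_rfl (by omega))
          (by rw [hj2]; exact hkey (2*c+3) (by omega) le_rfl)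
          hne12
        have heq : dist (P (j+1)) (P (j+2)) = D := by
          have := hPcyc (j+1)
          rwa [show j + 1 + 1 = j + 2 by ring] at this
        rw [heq] at hlt
        exact lt_irrefl D hlt
    have hsum : (j - i).val + (i - j).val = 2*k+3 := by
      have h0 : (j - i) + (i - j) = 0 := by ring
      have hval := congrArg Fin.val h0
      rw [Fin.val_add] at hval
      simp only [Fin.val_zero] at hval
      have h1 : (j - i).val ≠ 0 := fun h => (sub_ne_zero.2 (Ne.symm hij)) (Fin.ext (by simp [h]))
      have h2 : (i - j).val ≠ 0 := fun h => (sub_ne_zero.2 hij) (Fin.ext (by simp [h]))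
      have h3 := (j - i).is_lt
      have h4 := (i - j).is_lt
      obtain ⟨r, hr⟩ := Nat.dvd_of_mod_eq_zero hval
      have hub : (2*k+3) * r < (2*k+3) * 2 := by rw [← hr]; omega
      have hr2 : r < 2 := Nat.lt_of_mul_lt_mul_left hub
      have hlb : 0 < (2*k+3) * r := by rw [← hr]; omega
      have hr1 : r = 1 := by
        rcases Nat.eq_zero_or_pos r with h | h
        · subst h; simp at hlb
        · omega
      rw [hr1, mul_one] at hr
      omega
    rcases Nat.even_or_odd ((j - i).val) with he | ho
    · have ho' : Odd ((i - j).val) := by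
        rcases he with ⟨r, hr⟩
        rw [Nat.odd_iff]; omega
      exact aux j i (Ne.symm hij) ho' hdj hdi
    · exact aux i j hij ho hdi hdj
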